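/- Let X be a compact metric space and let A, B be disjoint closed subsets of X. Then either there exists a connected compact subset C of X with C ∩ A ≠ ∅ and C ∩ B ≠ ∅, or X can be written as the union of two disjoint compact subsets X_A and X_B with A ⊆ X_A and B ⊆ X_B. -/
import Mathlib


/-- In a compact metric space, given disjoint closed subsets `A`, `B`,
either there is a subcontinuum meeting both, or the space splits into disjoint compact
sets containing `A` and `B` respectively. -/
theorem continuum_or_separation {X : Type*} [MetricSpace X] [CompactSpace X]
    (A B : Set X) (hA : IsClosed A) (hB : IsClosed B) (hAB : Disjoint A B) :
    (∃ C : Set X, IsCompact C ∧ IsConnected C ∧ (C ∩ A).Nonempty ∧ (C ∩ B).Nonempty) ∨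
    (∃ XA XB : Set X, IsCompact XA ∧ IsCompact XB ∧ Disjoint XA XB ∧
      XA ∪ XB = Set.univ ∧ A ⊆ XA ∧ B ⊆ XB) := by
  by_cases h : ∃ a ∈ A, (connectedComponent a ∩ B).Nonempty
  · obtain ⟨a, ha, hab⟩ := h
    exact Or.inl ⟨connectedComponent a, isClosed_connectedComponent.isCompact,
      isConnected_connectedComponent, ⟨a, mem_connectedComponent, ha⟩, hab⟩
  · push_neg at h
    have key : ∀ a ∈ A, ∃ U : Set X, IsClopen U ∧ a ∈ U ∧ U ∩ B = ∅ := by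
      intro a ha
      have hcomp := connectedComponent_eq_iInter_isClopen a
      have hBc : B ∩ ⋂ Z : {Z : Set X // IsClopen Z ∧ a ∈ Z}, (Z : Set X) = ∅ := by
        rw [← hcomp, Set.inter_comm]
        exact h a ha
      obtain ⟨t, ht⟩ := hB.isCompact.elim_finite_subfamily_closed _
        (fun Z => Z.2.1.isClosed) hBc
      refine ⟨⋂ Z ∈ t, (Z : Set X), ?_, ?_, ?_⟩
      · exact isClopen_biInter_finset (fun Z _ => Z.2.1)
      · exact Set.mem_iInter₂.2 fun Z _ => Z.2.2
      · rw [Set.inter_comm]; exact ht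
    choose U hUc hUa hUB using fun a : A => key a a.2
    have hcover : A ⊆ ⋃ a : A, U a :=
      fun x hx => Set.mem_iUnion.2 ⟨⟨x, hx⟩, hUa ⟨x, hx⟩⟩
    obtain ⟨t, ht⟩ := hA.isCompact.elim_finite_subcover U (fun a => (hUc a).isOpen) hcover
    have hVc : IsClopen (⋃ a ∈ t, U a) := isClopen_biUnion_finset (fun a _ => hUc a)
    refine Or.inr ⟨⋃ a ∈ t, U a, (⋃ a ∈ t, U a)ᶜ, hVc.isClosed.isCompact,
      hVc.compl.isClosed.isCompact, disjoint_compl_right, Set.union_compl_self _, ht, ?_⟩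
    intro b hb
    simp only [Set.mem_compl_iff, Set.mem_iUnion]
    rintro ⟨a, _, hbUa⟩
    have : b ∈ U a ∩ B := ⟨hbUa, hb⟩
    rw [hUB a] at this
    exact this
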